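/- Under the same hypotheses (N = e^F ∈ Σ_+^{(1)}), the deformed beta numbers b_{m,n} := ∫_0^1 q_m(η) q_n(1−η) dη satisfy b_{m,n} ≥ x_m! x_n!/(m+n+1)! for all m, n. -/

import Mathlib

open PowerSeries Finset

/-- Formal exponential of a power series (intended for series with zero constant term):
coefficientwise `exp F = ∑_k F^k / k!`, which is a finite sum in each coefficient. -/
noncomputable def expS (F : PowerSeries ℝ) : PowerSeries ℝ :=
  PowerSeries.mk fun n => ∑ k ∈ Finset.range (n + 1),
    (1 / (k.factorial : ℝ)) * PowerSeries.coeff n (F ^ k)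

/-- Formal logarithm of a power series (intended for series with constant term 1):
coefficientwise `log N = ∑_{k≥1} (-1)^{k+1} (N-1)^k / k`. -/
noncomputable def logS (N : PowerSeries ℝ) : PowerSeries ℝ :=
  PowerSeries.mk fun n => ∑ k ∈ Finset.range (n + 1),
    ((-1 : ℝ) ^ (k + 1) / (k : ℝ)) * PowerSeries.coeff n ((N - 1) ^ k)

/-- The formal power `N^η := exp (η · log N)`. -/
noncomputable def powS (N : PowerSeries ℝ) (η : ℝ) : PowerSeries ℝ :=
  expS (η • logS N)

/-- Deformed factorial `x_n! = x_1 x_2 ⋯ x_n`, with `x_0! = 1`. -/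
noncomputable def xfac (x : ℕ → ℝ) (n : ℕ) : ℝ := ∏ k ∈ Finset.Icc 1 n, x k

open MeasureTheory

lemma coeff_pow_eq_zero {F : PowerSeries ℝ} (h0 : PowerSeries.constantCoeff F = 0)
    {n k : ℕ} (h : n < k) : PowerSeries.coeff n (F ^ k) = 0 := by
  induction k generalizing n with
  | zero => omega
  | succ k ih =>
    rw [pow_succ, PowerSeries.coeff_mul]
    apply Finset.sum_eq_zero
    rintro ⟨i, j⟩ hij
    rw [Finset.HasAntidiagonal.mem_antidiagonal] at hij
    by_cases hik : i < k
    · rw [ih hik, zero_mul]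
    · have hj : j = 0 := by omega
      subst hj
      rw [PowerSeries.coeff_zero_eq_constantCoeff, h0, mul_zero]

lemma coeff_expS {F : PowerSeries ℝ} (h0 : PowerSeries.constantCoeff F = 0)
    {n m : ℕ} (h : n ≤ m) :
    PowerSeries.coeff n (expS F) =
      ∑ k ∈ Finset.range (m + 1), (1 / (k.factorial : ℝ)) * PowerSeries.coeff n (F ^ k) := by
  rw [expS, PowerSeries.coeff_mk]
  apply Finset.sum_subset
  · exact Finset.range_subset_range.2 (by omega)
  · intro k hk hk'
    rw [Finset.mem_range] at hk hk'
    rw [coeff_pow_eq_zero h0 (by omega), mul_zero]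

lemma coeff_logS {N : PowerSeries ℝ} (h0 : PowerSeries.constantCoeff (N - 1) = 0)
    {n m : ℕ} (h : n ≤ m) :
    PowerSeries.coeff n (logS N) =
      ∑ k ∈ Finset.range (m + 1),
        ((-1 : ℝ) ^ (k + 1) / (k : ℝ)) * PowerSeries.coeff n ((N - 1) ^ k) := by
  rw [logS, PowerSeries.coeff_mk]
  apply Finset.sum_subset
  · exact Finset.range_subset_range.2 (by omega)
  · intro k hk hk'
    rw [Finset.mem_range] at hk hk'
    rw [coeff_pow_eq_zero h0 (by omega), mul_zero]

lemma constantCoeff_expS (F : PowerSeries ℝ) :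
    PowerSeries.constantCoeff (expS F) = 1 := by
  rw [← PowerSeries.coeff_zero_eq_constantCoeff, expS, PowerSeries.coeff_mk]
  simp

lemma exp_ode {F : PowerSeries ℝ} (h0 : PowerSeries.constantCoeff F = 0) :
    d⁄dX ℝ (expS F) = expS F * d⁄dX ℝ F := by
  ext n
  set S : PowerSeries ℝ := ∑ k ∈ Finset.range (n + 2), ((k.factorial : ℝ)⁻¹) • F ^ k with hS
  set S' : PowerSeries ℝ := ∑ j ∈ Finset.range (n + 1), ((j.factorial : ℝ)⁻¹) • F ^ j with hS'
  have hcoeffS : ∀ i ≤ n + 1, PowerSeries.coeff i (expS F) = PowerSeries.coeff i S := by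
    intro i hi
    rw [coeff_expS h0 hi, hS, map_sum]
    apply Finset.sum_congr rfl
    intro k _
    rw [PowerSeries.coeff_smul, smul_eq_mul, one_div]
  have hcoeffS' : ∀ i ≤ n, PowerSeries.coeff i (expS F) = PowerSeries.coeff i S' := by
    intro i hi
    rw [coeff_expS h0 hi, hS', map_sum]
    apply Finset.sum_congr rfl
    intro k _
    rw [PowerSeries.coeff_smul, smul_eq_mul, one_div]
  have hdS : d⁄dX ℝ S = S' * d⁄dX ℝ F := by
    rw [hS, map_sum]
    rw [Finset.sum_range_succ']
    have h00 : ((Nat.factorial 0 : ℝ))⁻¹ • (F ^ 0) = (1 : PowerSeries ℝ) := by simp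
    rw [h00]
    rw [Derivation.map_one_eq_zero, add_zero]
    rw [hS', Finset.sum_mul]
    apply Finset.sum_congr rfl
    intro j _
    rw [Derivation.map_smul, Derivation.leibniz_pow]
    simp only [Nat.succ_sub_one, smul_eq_mul]
    rw [← Nat.cast_smul_eq_nsmul ℝ, smul_smul, smul_mul_assoc]
    congr 1
    rw [Nat.factorial_succ]
    push_cast
    rw [mul_inv, mul_comm ((j:ℝ)+1)⁻¹, mul_assoc, inv_mul_cancel₀ (by positivity), mul_one]
  calc PowerSeries.coeff n (d⁄dX ℝ (expS F))
      = PowerSeries.coeff (n+1) (expS F) * (n+1) := PowerSeries.coeff_derivative _ n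
    _ = PowerSeries.coeff (n+1) S * (n+1) := by rw [hcoeffS (n+1) le_rfl]
    _ = PowerSeries.coeff n (d⁄dX ℝ S) := (PowerSeries.coeff_derivative _ n).symm
    _ = PowerSeries.coeff n (S' * d⁄dX ℝ F) := by rw [hdS]
    _ = PowerSeries.coeff n (expS F * d⁄dX ℝ F) := by
        rw [PowerSeries.coeff_mul, PowerSeries.coeff_mul]
        apply Finset.sum_congr rfl
        rintro ⟨i, j⟩ hij
        rw [Finset.HasAntidiagonal.mem_antidiagonal] at hij
        rw [hcoeffS' i (by omega)]

lemma log_ode {N : PowerSeries ℝ} (h1 : PowerSeries.constantCoeff N = 1) :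
    d⁄dX ℝ (logS N) * N = d⁄dX ℝ N := by
  set u : PowerSeries ℝ := N - 1 with hu
  have h0u : PowerSeries.constantCoeff u = 0 := by
    rw [hu, map_sub, h1, map_one, sub_self]
  ext n
  set L : PowerSeries ℝ :=
    ∑ k ∈ Finset.range (n + 2), ((-1 : ℝ) ^ (k + 1) / (k : ℝ)) • u ^ k with hL
  have hcoeffL : ∀ i ≤ n + 1, PowerSeries.coeff i (logS N) = PowerSeries.coeff i L := by
    intro i hi
    rw [coeff_logS h0u hi, hL, map_sum]
    apply Finset.sum_congr rfl
    intro k _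
    rw [PowerSeries.coeff_smul, smul_eq_mul]
  have hdL : d⁄dX ℝ L = (∑ j ∈ Finset.range (n + 1), (-u) ^ j) * d⁄dX ℝ u := by
    rw [hL, map_sum, Finset.sum_range_succ']
    have h00 : ((-1 : ℝ) ^ (0 + 1) / ((0:ℕ) : ℝ)) • u ^ 0 = ((-1:ℝ)/0) • (1 : PowerSeries ℝ) := by
      norm_num
    rw [h00]
    simp only [Nat.cast_zero, div_zero, zero_smul, map_zero, add_zero]
    rw [Finset.sum_mul]
    apply Finset.sum_congr rfl
    intro j _
    rw [Derivation.map_smul, Derivation.leibniz_pow]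
    simp only [Nat.succ_sub_one, smul_eq_mul]
    rw [← Nat.cast_smul_eq_nsmul ℝ, smul_smul]
    have hc : (-1 : ℝ) ^ (j + 1 + 1) / ((j + 1 : ℕ) : ℝ) * ((j + 1 : ℕ) : ℝ) = (-1:ℝ)^j := by
      push_cast
      rw [div_mul_cancel₀]
      · ring
      · positivity
    have hnu : (-u) ^ j = ((-1:ℝ) ^ j) • u ^ j := by
      rw [← neg_one_smul ℝ u, smul_pow]
    rw [hc, hnu, smul_mul_assoc]
  have key : PowerSeries.coeff n (d⁄dX ℝ (logS N) * N) = PowerSeries.coeff n (d⁄dX ℝ L * N) := by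
    rw [PowerSeries.coeff_mul, PowerSeries.coeff_mul]
    apply Finset.sum_congr rfl
    rintro ⟨i, j⟩ hij
    rw [Finset.HasAntidiagonal.mem_antidiagonal] at hij
    congr 1
    rw [PowerSeries.coeff_derivative, PowerSeries.coeff_derivative, hcoeffL (i+1) (by omega)]
  rw [key, hdL]
  have hN1u : N = 1 - (-u) := by rw [hu]; ring
  have hgeom : (∑ j ∈ Finset.range (n + 1), (-u) ^ j) * N = 1 - (-u) ^ (n + 1) := by
    rw [hN1u]
    have := geom_sum_mul (-u : PowerSeries ℝ) (n+1)
    -- geom_sum_mul : (∑ i in range n, x ^ i) * (x - 1) = x ^ n - 1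
    have h2 : (∑ j ∈ Finset.range (n + 1), (-u) ^ j) * (1 - -u)
        = -((∑ j ∈ Finset.range (n + 1), (-u) ^ j) * (-u - 1)) := by ring
    rw [h2, this]
    ring
  rw [mul_comm (∑ j ∈ Finset.range (n + 1), (-u) ^ j), mul_assoc, hgeom]
  have hdu : d⁄dX ℝ u = d⁄dX ℝ N := by
    rw [hu, map_sub, Derivation.map_one_eq_zero, sub_zero]
  rw [← hdu]
  rw [mul_sub, mul_one]
  rw [map_sub]
  have hzero : PowerSeries.coeff n (d⁄dX ℝ u * (-u) ^ (n + 1)) = 0 := by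
    rw [mul_comm, PowerSeries.coeff_mul]
    apply Finset.sum_eq_zero
    rintro ⟨i, j⟩ hij
    rw [Finset.HasAntidiagonal.mem_antidiagonal] at hij
    have h0nu : PowerSeries.constantCoeff (-u) = 0 := by rw [map_neg, h0u, neg_zero]
    rw [coeff_pow_eq_zero h0nu (by omega : i < n + 1), zero_mul]
  rw [hzero, sub_zero]

lemma logS_expS {F : PowerSeries ℝ} (h0 : PowerSeries.constantCoeff F = 0) :
    logS (expS F) = F := by
  have h1 : PowerSeries.constantCoeff (expS F) = 1 := constantCoeff_expS F
  have hNne : (expS F : PowerSeries ℝ) ≠ 0 := by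
    intro h
    rw [h, map_zero] at h1
    exact one_ne_zero h1.symm
  have hD : d⁄dX ℝ (logS (expS F)) = d⁄dX ℝ F := by
    have h2 : d⁄dX ℝ (logS (expS F)) * expS F = d⁄dX ℝ F * expS F := by
      rw [log_ode h1, exp_ode h0, mul_comm]
    exact mul_right_cancel₀ hNne h2
  apply PowerSeries.derivative.ext hD
  have hl : PowerSeries.coeff 0 (logS (expS F)) = 0 := by
    rw [coeff_logS (by rw [map_sub, h1, map_one, sub_self]) (le_refl 0)]
    simp
  rw [← PowerSeries.coeff_zero_eq_constantCoeff, hl, PowerSeries.coeff_zero_eq_constantCoeff, h0]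

lemma coeff_pow_nonneg {F : PowerSeries ℝ} (hpos : ∀ i, 0 ≤ PowerSeries.coeff i F)
    (k i : ℕ) : 0 ≤ PowerSeries.coeff i (F ^ k) := by
  induction k generalizing i with
  | zero =>
    rw [pow_zero, PowerSeries.coeff_one]
    split <;> norm_num
  | succ k ih =>
    rw [pow_succ, PowerSeries.coeff_mul]
    apply Finset.sum_nonneg
    rintro ⟨p, q⟩ _
    exact mul_nonneg (ih p) (hpos q)

lemma coeff_pow_self {F : PowerSeries ℝ} (h0 : PowerSeries.constantCoeff F = 0) (n : ℕ) :
    PowerSeries.coeff n (F ^ n) = (PowerSeries.coeff 1 F) ^ n := by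
  induction n with
  | zero => simp
  | succ n ih =>
    rw [pow_succ, PowerSeries.coeff_mul]
    rw [Finset.sum_eq_single (n, 1)]
    · rw [ih, pow_succ]
    · rintro ⟨p, q⟩ hpq hne
      rw [Finset.HasAntidiagonal.mem_antidiagonal] at hpq
      by_cases hp : p < n
      · rw [coeff_pow_eq_zero h0 hp, zero_mul]
      · by_cases hp2 : p = n
        · exfalso; apply hne; simp [hp2]; omega
        · have : q = 0 := by omega
          subst this
          rw [PowerSeries.coeff_zero_eq_constantCoeff, h0, mul_zero]
    · intro h
      exfalso
      exact h (Finset.HasAntidiagonal.mem_antidiagonal.2 (by omega))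

lemma coeff_powS_expS {F : PowerSeries ℝ} (h0 : PowerSeries.constantCoeff F = 0)
    (η : ℝ) (n : ℕ) :
    PowerSeries.coeff n (powS (expS F) η) =
      ∑ k ∈ Finset.range (n + 1),
        (1 / (k.factorial : ℝ)) * (η ^ k * PowerSeries.coeff n (F ^ k)) := by
  rw [powS, logS_expS h0]
  have h0' : PowerSeries.constantCoeff (η • F) = 0 := by
    rw [PowerSeries.constantCoeff_smul, h0, smul_zero]
  rw [coeff_expS h0' (le_refl n)]
  apply Finset.sum_congr rfl
  intro k _
  rw [smul_pow, PowerSeries.coeff_smul, smul_eq_mul]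

open intervalIntegral in
lemma betaNat : ∀ (n m : ℕ), ∫ x in (0:ℝ)..1, x ^ m * (1 - x) ^ n
    = (m.factorial : ℝ) * n.factorial / ((m + n + 1).factorial : ℝ) := by
  intro n
  induction n with
  | zero =>
    intro m
    simp only [pow_zero, mul_one, Nat.factorial_zero, Nat.cast_one]
    rw [integral_pow]
    rw [Nat.factorial_succ]
    push_cast
    field_simp
    simp
  | succ n ih =>
    intro m
    have hInt1 : IntervalIntegrable (fun x : ℝ => x ^ m * (1 - x) ^ (n + 1)) MeasureTheory.volume 0 1 :=
      (Continuous.intervalIntegrable (by continuity) 0 1)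
    have hInt2 : IntervalIntegrable (fun x : ℝ => x ^ (m + 1) * (1 - x) ^ n) MeasureTheory.volume 0 1 :=
      (Continuous.intervalIntegrable (by continuity) 0 1)
    have key : ∫ x in (0:ℝ)..1,
        (((m:ℝ)+1) * (x ^ m * (1 - x) ^ (n+1)) - ((n:ℝ)+1) * (x ^ (m+1) * (1 - x) ^ n)) = 0 := by
      have hderiv : ∀ x ∈ Set.uIcc (0:ℝ) 1,
          HasDerivAt (fun y : ℝ => y ^ (m+1) * (1 - y) ^ (n+1))
            (((m:ℝ)+1) * (x ^ m * (1 - x) ^ (n+1)) - ((n:ℝ)+1) * (x ^ (m+1) * (1 - x) ^ n)) x := by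
        intro x _
        have h1 : HasDerivAt (fun y : ℝ => y ^ (m+1)) (((m:ℝ)+1) * x ^ m) x := by
          simpa using hasDerivAt_pow (m+1) x
        have h2 : HasDerivAt (fun y : ℝ => (1 - y) ^ (n+1))
            (-(((n:ℝ)+1) * (1 - x) ^ n)) x := by
          have hb : HasDerivAt (fun y : ℝ => 1 - y) (-1) x := by
            simpa using ((hasDerivAt_id x).const_sub 1)
          have := hb.fun_pow (n+1)
          simpa using this
        have := h1.fun_mul h2
        exact this.congr_deriv (by ring)
      have hcont : IntervalIntegrable (fun x : ℝ =>
          (((m:ℝ)+1) * (x ^ m * (1 - x) ^ (n+1)) - ((n:ℝ)+1) * (x ^ (m+1) * (1 - x) ^ n)))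
          MeasureTheory.volume 0 1 :=
        (Continuous.intervalIntegrable (by continuity) 0 1)
      rw [integral_eq_sub_of_hasDerivAt hderiv hcont]
      norm_num
    rw [integral_sub ((hInt1.const_mul _)) ((hInt2.const_mul _))] at key
    rw [intervalIntegral.integral_const_mul, intervalIntegral.integral_const_mul] at key
    have heq : ((m:ℝ)+1) * ∫ x in (0:ℝ)..1, x ^ m * (1 - x) ^ (n+1)
        = ((n:ℝ)+1) * ∫ x in (0:ℝ)..1, x ^ (m+1) * (1 - x) ^ n := by linarith
    have hm1 : ((m:ℝ)+1) ≠ 0 := by positivity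
    have := ih (m+1)
    rw [this] at heq
    have goal : (∫ x in (0:ℝ)..1, x ^ m * (1 - x) ^ (n+1))
        = ((n:ℝ)+1) * ((((m+1).factorial : ℝ)) * n.factorial / (((m+1) + n + 1).factorial : ℝ)) / (((m:ℝ)+1)) := by
      field_simp at heq ⊢
      linarith
    rw [goal]
    have h1 : ((m+1) + n + 1) = (m + (n+1) + 1) := by omega
    rw [h1, Nat.factorial_succ m, Nat.factorial_succ n]
    push_cast
    have h2 : ((m + (n+1) + 1).factorial : ℝ) ≠ 0 := by positivity
    field_simp

/-- The coefficient of `t^n` in `N^η`, as an explicit polynomial in `η`. -/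
noncomputable def Pfun (F : PowerSeries ℝ) (n : ℕ) (η : ℝ) : ℝ :=
  ∑ k ∈ Finset.range (n + 1),
    (1 / (k.factorial : ℝ)) * (η ^ k * PowerSeries.coeff n (F ^ k))

lemma Pfun_nonneg {F : PowerSeries ℝ} (hpos : ∀ i, 0 ≤ PowerSeries.coeff i F)
    (n : ℕ) {η : ℝ} (hη : 0 ≤ η) : 0 ≤ Pfun F n η := by
  apply Finset.sum_nonneg
  intro k _
  have h1 : (0:ℝ) ≤ 1 / (k.factorial : ℝ) := by positivity
  exact mul_nonneg h1 (mul_nonneg (pow_nonneg hη k) (coeff_pow_nonneg hpos k n))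

lemma Pfun_low {F : PowerSeries ℝ} (hpos : ∀ i, 0 ≤ PowerSeries.coeff i F)
    (hFn : PowerSeries.coeff 1 F = 1) (h0 : PowerSeries.constantCoeff F = 0)
    (n : ℕ) {η : ℝ} (hη : 0 ≤ η) :
    (1 / (n.factorial : ℝ)) * η ^ n ≤ Pfun F n η := by
  have hmem : n ∈ Finset.range (n + 1) := Finset.self_mem_range_succ n
  have hsingle := Finset.single_le_sum (f := fun k => (1 / (k.factorial : ℝ)) *
      (η ^ k * PowerSeries.coeff n (F ^ k)))
    (fun k _ => by
      have h1 : (0:ℝ) ≤ 1 / (k.factorial : ℝ) := by positivity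
      exact mul_nonneg h1 (mul_nonneg (pow_nonneg hη k) (coeff_pow_nonneg hpos k n)))
    hmem
  have htop : PowerSeries.coeff n (F ^ n) = 1 := by
    rw [coeff_pow_self h0, hFn, one_pow]
  calc (1 / (n.factorial : ℝ)) * η ^ n
      = (1 / (n.factorial : ℝ)) * (η ^ n * PowerSeries.coeff n (F ^ n)) := by
        rw [htop, mul_one]
    _ ≤ Pfun F n η := hsingle

lemma Pfun_cont (F : PowerSeries ℝ) (n : ℕ) : Continuous (Pfun F n) := by
  apply continuous_finset_sum
  intro k _
  exact continuous_const.mul ((continuous_pow k).mul continuous_const)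

open MeasureTheory

theorem stmt19 (a : ℕ → ℝ) (ha0 : a 0 = 0) (ha1 : a 1 = 1) (ha : ∀ n, 0 ≤ a n)
    (hsum : Summable a)
    (N : PowerSeries ℝ) (hN : N = expS (PowerSeries.mk a))
    (xf : ℕ → ℝ) (hxf : ∀ n, xf n = (PowerSeries.coeff n N)⁻¹)
    (q : ℕ → ℝ → ℝ)
    (hq : ∀ n η, q n η = xf n * PowerSeries.coeff n (powS N η))
    (b : ℕ → ℕ → ℝ)
    (hb : ∀ m n, b m n = ∫ η in Set.Icc (0 : ℝ) 1, q m η * q n (1 - η)) :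
    ∀ m n : ℕ, xf m * xf n / ((m + n + 1).factorial : ℝ) ≤ b m n := by
  have h0 : PowerSeries.constantCoeff (PowerSeries.mk a) = 0 := by
    rw [PowerSeries.constantCoeff_mk, ha0]
  have hposF : ∀ i, 0 ≤ PowerSeries.coeff i (PowerSeries.mk a) := fun i => by
    rw [PowerSeries.coeff_mk]; exact ha i
  have h1F : PowerSeries.coeff 1 (PowerSeries.mk a) = 1 := by
    rw [PowerSeries.coeff_mk, ha1]
  have hqP : ∀ n η, q n η = xf n * Pfun (PowerSeries.mk a) n η := by
    intro n η
    rw [hq, hN, coeff_powS_expS h0, Pfun]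
  have hNpos : ∀ n, 0 < PowerSeries.coeff n N := by
    intro n
    have hPv : PowerSeries.coeff n N = Pfun (PowerSeries.mk a) n 1 := by
      rw [hN, coeff_expS h0 (le_refl n), Pfun]
      exact Finset.sum_congr rfl fun k _ => by rw [one_pow, one_mul]
    rw [hPv]
    calc (0:ℝ) < (1 / (n.factorial : ℝ)) * 1 ^ n := by positivity
      _ ≤ Pfun (PowerSeries.mk a) n 1 := Pfun_low hposF h1F h0 n zero_le_one
  have hxfpos : ∀ n, 0 < xf n := fun n => by
    rw [hxf]; exact inv_pos.2 (hNpos n)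
  have hqcont : ∀ n, Continuous (q n) := by
    intro n
    have he : q n = fun η => xf n * Pfun (PowerSeries.mk a) n η := funext fun η => hqP n η
    rw [he]
    exact continuous_const.mul (Pfun_cont _ n)
  intro m n
  rw [hb]
  have hC : (0:ℝ) < xf m * xf n / ((m.factorial : ℝ) * (n.factorial : ℝ)) := by
    have := hxfpos m; have := hxfpos n
    positivity
  have hmono : ∀ η ∈ Set.Icc (0:ℝ) 1,
      xf m * xf n / ((m.factorial : ℝ) * (n.factorial : ℝ)) * (η ^ m * (1 - η) ^ n)
        ≤ q m η * q n (1 - η) := by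
    rintro η ⟨hη0, hη1⟩
    have h1η : (0:ℝ) ≤ 1 - η := by linarith
    rw [hqP, hqP]
    have e1 : xf m * xf n / ((m.factorial : ℝ) * (n.factorial : ℝ)) * (η ^ m * (1 - η) ^ n)
        = (xf m * ((1 / (m.factorial : ℝ)) * η ^ m)) *
          (xf n * ((1 / (n.factorial : ℝ)) * (1 - η) ^ n)) := by
      ring
    rw [e1]
    apply mul_le_mul
    · exact mul_le_mul_of_nonneg_left (Pfun_low hposF h1F h0 m hη0) (le_of_lt (hxfpos m))
    · exact mul_le_mul_of_nonneg_left (Pfun_low hposF h1F h0 n h1η) (le_of_lt (hxfpos n))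
    · have h1 : (0:ℝ) ≤ 1 / (n.factorial : ℝ) := by positivity
      exact mul_nonneg (le_of_lt (hxfpos n)) (mul_nonneg h1 (pow_nonneg h1η n))
    · exact mul_nonneg (le_of_lt (hxfpos m)) (Pfun_nonneg hposF m hη0)
  have hgcont : Continuous (fun η : ℝ =>
      xf m * xf n / ((m.factorial : ℝ) * (n.factorial : ℝ)) * (η ^ m * (1 - η) ^ n)) := by
    apply continuous_const.mul
    exact (continuous_pow m).mul ((continuous_const.sub continuous_id).pow n)
  have hgint : IntegrableOn (fun η : ℝ =>
      xf m * xf n / ((m.factorial : ℝ) * (n.factorial : ℝ)) * (η ^ m * (1 - η) ^ n))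
      (Set.Icc (0:ℝ) 1) volume := hgcont.integrableOn_Icc
  have hfint : IntegrableOn (fun η => q m η * q n (1 - η)) (Set.Icc (0:ℝ) 1) volume :=
    Continuous.integrableOn_Icc ((hqcont m).mul ((hqcont n).comp
      (continuous_const.sub continuous_id)))
  have hle := MeasureTheory.setIntegral_mono_on hgint hfint measurableSet_Icc hmono
  refine le_trans (le_of_eq ?_) hle
  have hgval : ∫ η in Set.Icc (0:ℝ) 1,
      xf m * xf n / ((m.factorial : ℝ) * (n.factorial : ℝ)) * (η ^ m * (1 - η) ^ n)
      = xf m * xf n / ((m.factorial : ℝ) * (n.factorial : ℝ)) *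
        ((m.factorial : ℝ) * (n.factorial : ℝ) / ((m + n + 1).factorial : ℝ)) := by
    rw [MeasureTheory.integral_Icc_eq_integral_Ioc,
      ← intervalIntegral.integral_of_le (zero_le_one),
      intervalIntegral.integral_const_mul, betaNat n m]
  rw [hgval]
  have hfm : ((m.factorial : ℝ)) ≠ 0 := by positivity
  have hfn : ((n.factorial : ℝ)) ≠ 0 := by positivity
  have hfmn : (((m + n + 1).factorial : ℝ)) ≠ 0 := by positivity
  field_simp
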